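/- arXiv:1405.5605 — 3 statements merged into one kernel-verified Lean document; each statement's English description precedes it below -/
import Mathlib

section
/- Let t be the Thue–Morse sequence and h the sequence counting 0s mod 2 in binary representations. Then LSD(h, t) = 1/3 and USD(h, t) = 2/3. -/
/-- The Thue–Morse sequence: parity of the number of 1s in binary representation. -/
def t (n : ℕ) : ℕ := (Nat.digits 2 n).count 1 % 2

/-- The sequence h: parity of the number of 0s in the binary representation (h 0 = 0). -/
def hseq (n : ℕ) : ℕ := (Nat.digits 2 n).count 0 % 2

noncomputable def SDp (x y : ℕ → ℕ) (n : ℕ) : ℝ :=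
  (∑ i ∈ Finset.range n, if x i = y i then (1 : ℝ) else 0) / n

noncomputable def LSD (x y : ℕ → ℕ) : ℝ := Filter.liminf (SDp x y) Filter.atTop
noncomputable def USD (x y : ℕ → ℕ) : ℝ := Filter.limsup (SDp x y) Filter.atTop

/-- indicator that the binary length of n is even -/
def cc (n : ℕ) : ℕ := if (Nat.digits 2 n).length % 2 = 0 then 1 else 0

def SS (N : ℕ) : ℕ := ∑ i ∈ Finset.range N, cc i

lemma length_eq_count (l : List ℕ) (h : ∀ d ∈ l, d < 2) :
    l.length = l.count 0 + l.count 1 := by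
  induction l with
  | nil => simp
  | cons d l ih =>
    have hd : d < 2 := h d (by simp)
    have h2 := ih (fun x hx => h x (by simp [hx]))
    simp only [List.length_cons, List.count_cons, h2]
    interval_cases d <;> simp <;> omega

lemma indicator_eq (n : ℕ) : (if hseq n = t n then (1:ℝ) else 0) = (cc n : ℝ) := by
  have hlen : (Nat.digits 2 n).length = (Nat.digits 2 n).count 0 + (Nat.digits 2 n).count 1 :=
    length_eq_count _ (fun d hd => Nat.digits_lt_base (by norm_num) hd)
  unfold hseq t cc
  by_cases h : (Nat.digits 2 n).count 0 % 2 = (Nat.digits 2 n).count 1 % 2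
  · rw [if_pos h, if_pos (by omega), Nat.cast_one]
  · rw [if_neg h, if_neg (by omega), Nat.cast_zero]

lemma digits_two_mul {n : ℕ} (hn : 1 ≤ n) :
    Nat.digits 2 (2 * n) = 0 :: Nat.digits 2 n := by
  rw [Nat.digits_def' (by norm_num : 1 < 2) (by omega)]
  have h1 : 2 * n % 2 = 0 := by omega
  have h2 : 2 * n / 2 = n := by omega
  rw [h1, h2]

lemma digits_two_mul_add_one (n : ℕ) :
    Nat.digits 2 (2 * n + 1) = 1 :: Nat.digits 2 n := by
  rw [Nat.digits_def' (by norm_num : 1 < 2) (by omega)]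
  have h1 : (2 * n + 1) % 2 = 1 := by omega
  have h2 : (2 * n + 1) / 2 = n := by omega
  rw [h1, h2]

lemma cc_le_one (n : ℕ) : cc n ≤ 1 := by unfold cc; split_ifs <;> omega

lemma cc_two_mul {n : ℕ} (hn : 1 ≤ n) : cc (2 * n) + cc n = 1 := by
  unfold cc
  rw [digits_two_mul hn, List.length_cons]
  split_ifs <;> omega

lemma cc_two_mul_add_one {n : ℕ} (hn : 1 ≤ n) : cc (2 * n + 1) + cc n = 1 := by
  unfold cc
  rw [digits_two_mul_add_one n, List.length_cons]
  split_ifs <;> omega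

lemma cc_zero : cc 0 = 1 := by simp [cc]
lemma cc_one : cc 1 = 0 := by simp [cc]

lemma SS_succ (N : ℕ) : SS (N + 1) = SS N + cc N := by
  unfold SS; rw [Finset.sum_range_succ]

lemma SS_rec : ∀ N, 1 ≤ N → SS (2 * N) + 2 * SS N = 2 * N + 1 := by
  intro N
  induction N with
  | zero => omega
  | succ n ih =>
    intro _
    rcases Nat.eq_zero_or_pos n with hn | hn
    · subst hn
      norm_num
      have h1 : SS 1 = 1 := by simp [SS_succ, SS, cc_zero]
      have h2 := SS_succ 1
      rw [h1, cc_one] at h2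
      norm_num at h2
      omega
    · have ihn := ih hn
      have e1 : 2 * (n + 1) = (2 * n + 1) + 1 := by ring
      rw [e1, SS_succ, SS_succ, SS_succ]
      have := cc_two_mul hn
      have := cc_two_mul_add_one hn
      omega

lemma SS_bounds : ∀ N, 1 ≤ N → N + 2 ≤ 3 * SS N + cc N ∧ 3 * SS N + cc N ≤ 2 * N + 1 := by
  intro N
  induction N using Nat.strong_induction_on with
  | _ N ih =>
    intro hN
    rcases Nat.lt_or_ge N 2 with h2 | h2
    · interval_cases N
      have h1 : SS 1 = 1 := by simp [SS_succ, SS, cc_zero]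
      rw [h1, cc_one]
      omega
    · set M := N / 2 with hM
      have hM1 : 1 ≤ M := by omega
      have hIH := ih M (by omega) hM1
      have hrec := SS_rec M hM1
      have hc2 := cc_two_mul hM1
      have hc3 := cc_two_mul_add_one hM1
      have hccM := cc_le_one M
      have hS := SS_succ (2 * M)
      rcases Nat.even_or_odd N with he | ho
      · have hNe : N = 2 * M := by
          obtain ⟨k, hk⟩ := he; omega
        rw [hNe]
        omega
      · have hNe : N = 2 * M + 1 := by
          obtain ⟨k, hk⟩ := ho; omega
        rw [hNe]
        omega

lemma SS_pow4 : ∀ m, 3 * SS (4 ^ m) = 2 * 4 ^ m + 1 := by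
  intro m
  induction m with
  | zero =>
    have h1 : SS 1 = 1 := by simp [SS_succ, SS, cc_zero]
    simp [h1]
  | succ m ih =>
    have h4 : 1 ≤ 4 ^ m := Nat.one_le_pow m 4 (by norm_num)
    have r1 := SS_rec (4 ^ m) h4
    have r2 := SS_rec (2 * 4 ^ m) (by omega)
    have e : 2 * (2 * 4 ^ m) = 4 * 4 ^ m := by ring
    have e2 : (4:ℕ) ^ (m + 1) = 4 * 4 ^ m := by ring
    rw [e] at r2
    rw [e2]
    omega

lemma SS_two_pow4 (m : ℕ) : 3 * SS (2 * 4 ^ m) = 2 * 4 ^ m + 1 := by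
  have h4 : 1 ≤ 4 ^ m := Nat.one_le_pow m 4 (by norm_num)
  have r1 := SS_rec (4 ^ m) h4
  have := SS_pow4 m
  omega

open Filter Topology

lemma SDp_eq (N : ℕ) : SDp hseq t N = (SS N : ℝ) / N := by
  unfold SDp SS
  congr 1
  rw [Nat.cast_sum]
  exact Finset.sum_congr rfl fun i _ => indicator_eq i

lemma SS_le (N : ℕ) : SS N ≤ N := by
  calc SS N ≤ ∑ _i ∈ Finset.range N, 1 := Finset.sum_le_sum fun i _ => cc_le_one i
  _ = N := by simp

lemma SDp_nonneg (N : ℕ) : 0 ≤ SDp hseq t N := by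
  rw [SDp_eq]; positivity

lemma SDp_le_one (N : ℕ) : SDp hseq t N ≤ 1 := by
  rw [SDp_eq]
  rcases Nat.eq_zero_or_pos N with h | h
  · simp [h]
  · rw [div_le_one (by exact_mod_cast h)]
    exact_mod_cast SS_le N

lemma SDp_ge_third {N : ℕ} (h : 1 ≤ N) : 1 / 3 ≤ SDp hseq t N := by
  have hb := SS_bounds N h
  have hc := cc_le_one N
  have hN : 3 * SS N ≥ N := by omega
  have hN0 : (0:ℝ) < N := by exact_mod_cast h
  rw [SDp_eq, le_div_iff₀ hN0]
  have : (N:ℝ) ≤ 3 * (SS N : ℝ) := by exact_mod_cast hN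
  linarith

lemma SDp_le_ub {N : ℕ} (h : 1 ≤ N) : SDp hseq t N ≤ (2 * N + 1) / (3 * N) := by
  have hb := SS_bounds N h
  have hcn : cc N ≤ 1 := cc_le_one N
  have hN : 3 * SS N ≤ 2 * N + 1 := by omega
  have hN0 : (0:ℝ) < N := by exact_mod_cast h
  rw [SDp_eq, div_le_div_iff₀ hN0 (by linarith)]
  have : 3 * (SS N : ℝ) ≤ 2 * N + 1 := by exact_mod_cast hN
  nlinarith

lemma SDp_pow4 (m : ℕ) : SDp hseq t (4 ^ m) = 2 / 3 + (1 / 3) * (1 / 4 : ℝ) ^ m := by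
  have h := SS_pow4 m
  have h4 : (0:ℝ) < (4:ℝ) ^ m := by positivity
  have hc : 3 * (SS (4 ^ m) : ℝ) = 2 * (4:ℝ) ^ m + 1 := by exact_mod_cast h
  rw [SDp_eq]
  push_cast
  rw [div_eq_iff (by positivity)]
  field_simp
  have hq : (1 / 4 : ℝ) ^ m * 4 ^ m = 1 := by rw [← mul_pow]; norm_num
  nlinarith [hc, hq]

lemma SDp_2pow4 (m : ℕ) : SDp hseq t (2 * 4 ^ m) = 1 / 3 + (1 / 6) * (1 / 4 : ℝ) ^ m := by
  have h := SS_two_pow4 m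
  have h4 : (0:ℝ) < (4:ℝ) ^ m := by positivity
  have hc : 3 * (SS (2 * 4 ^ m) : ℝ) = 2 * (4:ℝ) ^ m + 1 := by exact_mod_cast h
  rw [SDp_eq]
  push_cast
  rw [div_eq_iff (by positivity)]
  field_simp
  have hq : (1 / 4 : ℝ) ^ m * 4 ^ m = 1 := by rw [← mul_pow]; norm_num
  nlinarith [hc, hq]

lemma quarter_pow_tendsto : Tendsto (fun m : ℕ => (1 / 4 : ℝ) ^ m) atTop (𝓝 0) :=
  tendsto_pow_atTop_nhds_zero_of_lt_one (by norm_num) (by norm_num)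

lemma tendsto_sub_pow4 : Tendsto (fun m => SDp hseq t (4 ^ m)) atTop (𝓝 (2 / 3)) := by
  have := (quarter_pow_tendsto.const_mul (1 / 3 : ℝ)).const_add (2 / 3 : ℝ)
  simp only [mul_zero, add_zero] at this
  exact this.congr (fun m => (SDp_pow4 m).symm)

lemma tendsto_sub_2pow4 : Tendsto (fun m => SDp hseq t (2 * 4 ^ m)) atTop (𝓝 (1 / 3)) := by
  have := (quarter_pow_tendsto.const_mul (1 / 6 : ℝ)).const_add (1 / 3 : ℝ)
  simp only [mul_zero, add_zero] at this
  exact this.congr (fun m => (SDp_2pow4 m).symm)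

lemma tendsto_ub : Tendsto (fun N : ℕ => (2 * N + 1 : ℝ) / (3 * N)) atTop (𝓝 (2 / 3)) := by
  have h0 := (tendsto_one_div_atTop_nhds_zero_nat.const_mul (1 / 3 : ℝ)).const_add (2 / 3 : ℝ)
  simp only [mul_zero, add_zero] at h0
  apply h0.congr'
  filter_upwards [eventually_ge_atTop 1] with N hN
  have hN0 : (0:ℝ) < N := by exact_mod_cast hN
  field_simp

lemma phi4_tendsto : Tendsto (fun m : ℕ => 4 ^ m) atTop atTop :=
  tendsto_pow_atTop_atTop_of_one_lt (by norm_num)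

lemma phi24_tendsto : Tendsto (fun m : ℕ => 2 * 4 ^ m) atTop atTop :=
  tendsto_atTop_mono (fun m => by nlinarith [Nat.one_le_pow m 4 (by norm_num)]) phi4_tendsto

lemma bdd_below_SDp : IsBoundedUnder (· ≥ ·) atTop (SDp hseq t) :=
  isBoundedUnder_of ⟨0, fun n => SDp_nonneg n⟩

lemma bdd_above_SDp : IsBoundedUnder (· ≤ ·) atTop (SDp hseq t) :=
  isBoundedUnder_of ⟨1, fun n => SDp_le_one n⟩

lemma liminf_comp_eq (φ : ℕ → ℕ) :
    Filter.liminf (SDp hseq t) (Filter.map φ atTop) = Filter.liminf (SDp hseq t ∘ φ) atTop := by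
  simp only [Filter.liminf, Filter.map_map]

lemma limsup_comp_eq (φ : ℕ → ℕ) :
    Filter.limsup (SDp hseq t) (Filter.map φ atTop) = Filter.limsup (SDp hseq t ∘ φ) atTop := by
  simp only [Filter.limsup, Filter.map_map]

theorem lsd_usd_h_t : LSD hseq t = 1/3 ∧ USD hseq t = 2/3 := by
  constructor
  · unfold LSD
    apply le_antisymm
    · -- liminf ≤ 1/3 via subsequence 2 * 4^m
      have hmap : Filter.map (fun m : ℕ => 2 * 4 ^ m) atTop ≤ atTop := phi24_tendsto
      have hco : (Filter.map (fun m : ℕ => 2 * 4 ^ m) atTop).IsCoboundedUnder (· ≥ ·) (SDp hseq t) := by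
        apply Filter.IsBoundedUnder.isCoboundedUnder_ge
        exact isBoundedUnder_of ⟨1, fun n => SDp_le_one n⟩
      have h1 : Filter.liminf (SDp hseq t) atTop ≤
          Filter.liminf (SDp hseq t) (Filter.map (fun m : ℕ => 2 * 4 ^ m) atTop) :=
        Filter.liminf_le_liminf_of_le hmap bdd_below_SDp hco
      rw [liminf_comp_eq] at h1
      simp only [Function.comp_def] at h1
      rwa [tendsto_sub_2pow4.liminf_eq] at h1
    · -- 1/3 ≤ liminf
      apply Filter.le_liminf_of_le
      · exact bdd_above_SDp.isCoboundedUnder_ge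
      · filter_upwards [eventually_ge_atTop 1] with N hN
        exact SDp_ge_third hN
  · unfold USD
    apply le_antisymm
    · -- limsup ≤ 2/3 by comparison
      have h2 : Filter.limsup (SDp hseq t) atTop ≤
          Filter.limsup (fun N : ℕ => (2 * N + 1 : ℝ) / (3 * N)) atTop := by
        apply Filter.limsup_le_limsup
        · filter_upwards [eventually_ge_atTop 1] with N hN
          exact SDp_le_ub hN
        · exact bdd_below_SDp.isCoboundedUnder_le
        · exact tendsto_ub.isBoundedUnder_le
      rwa [tendsto_ub.limsup_eq] at h2
    · -- 2/3 ≤ limsup via subsequence 4^m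
      have hmap : Filter.map (fun m : ℕ => 4 ^ m) atTop ≤ atTop := phi4_tendsto
      have hco : (Filter.map (fun m : ℕ => 4 ^ m) atTop).IsCoboundedUnder (· ≤ ·) (SDp hseq t) := by
        apply Filter.IsBoundedUnder.isCoboundedUnder_le
        exact isBoundedUnder_of ⟨0, fun n => SDp_nonneg n⟩
      have h1 : Filter.limsup (SDp hseq t) (Filter.map (fun m : ℕ => 4 ^ m) atTop) ≤
          Filter.limsup (SDp hseq t) atTop :=
        Filter.limsup_le_limsup_of_le hmap hco bdd_above_SDp
      rw [limsup_comp_eq] at h1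
      simp only [Function.comp_def] at h1
      rwa [tendsto_sub_pow4.limsup_eq] at h1
end

section
/- Let n, i ∈ ℕ with gcd(i, 2^n) ≤ 2^{n-2}, and let x, y be infinite binary sequences each of which is a concatenation of blocks from {t_n, t̄_n}. Then 1/4 ≤ LSD(x, y[i..∞]) ≤ USD(x, y[i..∞]) ≤ 3/4. -/
def mu (l : List ℕ) : List ℕ := l.flatMap (fun b => [b, 1 - b])
def tWord (n : ℕ) : List ℕ := mu^[n] [0]
def comp (l : List ℕ) : List ℕ := l.map (fun b => 1 - b)

/-- Thue–Morse bit function. -/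
def Tm : ℕ → ℕ := fun m => (Nat.digits 2 m).sum % 2

lemma Tm_le (m : ℕ) : Tm m ≤ 1 := Nat.lt_succ_iff.mp (Nat.mod_lt _ (by norm_num))

lemma Tm_zero : Tm 0 = 0 := by simp [Tm]

lemma Tm_two_mul (m : ℕ) : Tm (2 * m) = Tm m := by
  rcases Nat.eq_zero_or_pos m with rfl | hm
  · rfl
  · unfold Tm
    rw [Nat.digits_def' (by norm_num) (by omega)]
    simp [Nat.mul_div_cancel_left _ (by norm_num : 0 < 2), Nat.mul_mod_right]

lemma Tm_two_mul_add_one (m : ℕ) : Tm (2 * m + 1) = 1 - Tm m := by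
  unfold Tm
  rw [Nat.digits_def' (by norm_num) (by omega)]
  have h2 : (2 * m + 1) % 2 = 1 := by omega
  have h3 : (2 * m + 1) / 2 = m := by omega
  rw [h2, h3]
  simp only [List.sum_cons]
  have := Nat.mod_lt (Nat.digits 2 m).sum (show 0 < 2 by norm_num)
  omega

lemma mu_length (l : List ℕ) : (mu l).length = 2 * l.length := by
  induction l with
  | nil => rfl
  | cons a t ih => simp [mu] at ih ⊢; omega

lemma mu_getElem? (l : List ℕ) (j b : ℕ) (hj : j < l.length) (hb : b < 2) :
    (mu l)[2 * j + b]? = some (if b = 0 then l[j] else 1 - l[j]) := by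
  induction l generalizing j with
  | nil => simp at hj
  | cons a t ih =>
    have hmu : mu (a :: t) = a :: (1 - a) :: mu t := by simp [mu]
    rcases j with _ | j
    · interval_cases b <;> simp [hmu]
    · have hj' : j < t.length := by simpa using hj
      rw [show 2 * (j + 1) + b = (2 * j + b) + 1 + 1 by ring, hmu,
        List.getElem?_cons_succ, List.getElem?_cons_succ, ih j hj']
      simp

lemma tWord_length (n : ℕ) : (tWord n).length = 2 ^ n := by
  induction n with
  | zero => rfl
  | succ n ih =>
    have : tWord (n + 1) = mu (tWord n) := Function.iterate_succ_apply' mu n [0]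
    rw [this, mu_length, ih, pow_succ]; ring

lemma tWord_getElem? (n j : ℕ) (h : j < 2 ^ n) : (tWord n)[j]? = some (Tm j) := by
  induction n generalizing j with
  | zero =>
    interval_cases j
    simp [tWord, Tm]
  | succ n ih =>
    have ht : tWord (n + 1) = mu (tWord n) := Function.iterate_succ_apply' mu n [0]
    have hj2 : j / 2 < 2 ^ n := by
      have : j < 2 * 2 ^ n := by rw [← pow_succ']; exact h
      omega
    have hdecomp : 2 * (j / 2) + j % 2 = j := by omega
    have hb : j % 2 < 2 := Nat.mod_lt _ (by norm_num)
    have key := mu_getElem? (tWord n) (j / 2) (j % 2)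
      (by rw [tWord_length]; exact hj2) hb
    have hget : (tWord n)[j / 2]'(by rw [tWord_length]; exact hj2) = Tm (j / 2) := by
      have := ih (j / 2) hj2
      rw [List.getElem?_eq_getElem (by rw [tWord_length]; exact hj2)] at this
      exact Option.some.inj this
    rw [hget] at key
    rw [ht, ← hdecomp, key]
    rcases Nat.mod_two_eq_zero_or_one j with h0 | h1
    · rw [h0]; simp [Tm_two_mul]
    · rw [h1]; simp [Tm_two_mul_add_one]

/-- `x` is an infinite concatenation of blocks from `{t_n, t̄_n}`. -/
def IsBlockSeq (n : ℕ) (x : ℕ → ℕ) : Prop :=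
  ∀ k : ℕ, (List.range (2 ^ n)).map (fun j => x (k * 2 ^ n + j)) = tWord n ∨
    (List.range (2 ^ n)).map (fun j => x (k * 2 ^ n + j)) = comp (tWord n)

lemma Tm_split (v : ℕ) : ∀ a s : ℕ, s < 2 ^ v → Tm (2 ^ v * a + s) = (Tm a + Tm s) % 2 := by
  induction v with
  | zero =>
    intro a s hs
    interval_cases s
    have := Tm_le a
    simp [Tm_zero]
    omega
  | succ v ih =>
    intro a s hs
    have hs2 : s / 2 < 2 ^ v := by
      have : s < 2 * 2 ^ v := by rw [← pow_succ']; exact hs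
      omega
    have hts := Tm_le (s / 2)
    have hta := Tm_le a
    have htv := Tm_le (2 ^ v * a + s / 2)
    have key := ih a (s / 2) hs2
    have hw : 2 ^ (v+1) * a = 2 * (2 ^ v * a) := by ring
    rcases Nat.mod_two_eq_zero_or_one s with h0 | h1
    · have hd : 2 ^ (v+1) * a + s = 2 * (2 ^ v * a + s / 2) := by omega
      have hd2 : s = 2 * (s / 2) := by omega
      rw [hd, Tm_two_mul, key]
      conv_rhs => rw [hd2, Tm_two_mul]
    · have hd : 2 ^ (v+1) * a + s = 2 * (2 ^ v * a + s / 2) + 1 := by omega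
      have hd2 : s = 2 * (s / 2) + 1 := by omega
      rw [hd, Tm_two_mul_add_one, key]
      conv_rhs => rw [hd2, Tm_two_mul_add_one]
      omega

/-- Structure formula for block sequences. -/
lemma blockSeq_apply {n : ℕ} {x : ℕ → ℕ} (hx : IsBlockSeq n x) (m : ℕ) :
    x m = (x (m / 2 ^ n * 2 ^ n) + Tm (m % 2 ^ n)) % 2 := by
  set k := m / 2 ^ n with hk
  set j := m % 2 ^ n with hj
  have hjlt : j < 2 ^ n := Nat.mod_lt _ (pow_pos (by norm_num) n)
  have h0lt : 0 < 2 ^ n := pow_pos (by norm_num) n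
  have hm : m = k * 2 ^ n + j := by
    rw [hk, hj, mul_comm]; exact (Nat.div_add_mod m (2 ^ n)).symm
  have getx : ∀ (j' : ℕ), j' < 2 ^ n →
      ((List.range (2 ^ n)).map (fun j => x (k * 2 ^ n + j)))[j']? = some (x (k * 2^n + j')) := by
    intro j' hj'
    rw [List.getElem?_map, List.getElem?_range hj']
    rfl
  rcases hx k with hcase | hcase
  · have e1 := getx j hjlt
    have e0 := getx 0 h0lt
    rw [hcase, tWord_getElem? n j hjlt] at e1
    rw [hcase, tWord_getElem? n 0 h0lt] at e0
    have e1' : x (k * 2 ^ n + j) = Tm j := (Option.some.inj e1).symm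
    have e0' : x (k * 2 ^ n + 0) = Tm 0 := (Option.some.inj e0).symm
    rw [← hm] at e1'
    rw [Nat.add_zero] at e0'
    rw [e1', e0', Tm_zero]
    have := Tm_le j
    omega
  · have e1 := getx j hjlt
    have e0 := getx 0 h0lt
    have compget : ∀ (j' : ℕ) (h' : j' < 2 ^ n), (comp (tWord n))[j']? = some (1 - Tm j') := by
      intro j' h'
      unfold comp
      rw [List.getElem?_map, tWord_getElem? n j' h']
      rfl
    rw [hcase, compget j hjlt] at e1
    rw [hcase, compget 0 h0lt] at e0
    have e1' : x (k * 2 ^ n + j) = 1 - Tm j := (Option.some.inj e1).symm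
    have e0' : x (k * 2 ^ n + 0) = 1 - Tm 0 := (Option.some.inj e0).symm
    rw [← hm] at e1'
    rw [Nat.add_zero] at e0'
    rw [e1', e0', Tm_zero]
    have := Tm_le j
    omega

lemma blockSeq_le_one {n : ℕ} {x : ℕ → ℕ} (hx : IsBlockSeq n x) (m : ℕ) : x m ≤ 1 := by
  rw [blockSeq_apply hx m]; omega

lemma sum_range_mul {M : Type*} [AddCommMonoid M] (f : ℕ → M) (A B : ℕ) :
    ∑ j ∈ Finset.range (A * B), f j = ∑ a ∈ Finset.range A, ∑ b ∈ Finset.range B, f (a * B + b) := by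
  induction A with
  | zero => simp
  | succ A ih =>
    rw [Finset.sum_range_succ, ← ih, add_mul, one_mul, Finset.sum_range_add]

lemma Tm_pow_mul (v a : ℕ) : Tm (2 ^ v * a) = Tm a := by
  have h := Tm_split v a 0 (pow_pos (by norm_num) v)
  simp only [Nat.add_zero, Tm_zero] at h
  have := Tm_le a
  omega

lemma chunk_block {n v N : ℕ} (hn : n = v + N) {x : ℕ → ℕ} (hx : IsBlockSeq n x)
    (K w : ℕ) (hw : w < 2 ^ N) :
    x (2 ^ v * (2 ^ N * K + w)) = (x (2 ^ n * K) + Tm w) % 2 := by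
  have hpow : 2 ^ n = 2 ^ v * 2 ^ N := by rw [hn, pow_add]
  have hm : 2 ^ v * (2 ^ N * K + w) = 2 ^ n * K + 2 ^ v * w := by rw [hpow]; ring
  have hr : 2 ^ v * w < 2 ^ n := by
    rw [hpow]
    exact Nat.mul_lt_mul_of_le_of_lt (le_refl _) hw (pow_pos (by norm_num) v)
  have hdiv : (2 ^ v * (2 ^ N * K + w)) / 2 ^ n = K := by
    rw [hm, Nat.mul_add_div (pow_pos (by norm_num) n),
      Nat.div_eq_of_lt hr, Nat.add_zero]
  have hmod : (2 ^ v * (2 ^ N * K + w)) % 2 ^ n = 2 ^ v * w := by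
    rw [hm, Nat.mul_add_mod, Nat.mod_eq_of_lt hr]
  have h1 := blockSeq_apply hx (2 ^ v * (2 ^ N * K + w))
  rw [hdiv, hmod, Tm_pow_mul, mul_comm K] at h1
  exact h1

lemma chunk_formula {n v N : ℕ} (hn : n = v + N) {x : ℕ → ℕ} (hx : IsBlockSeq n x)
    (c s : ℕ) (hs : s < 2 ^ v) :
    x (2 ^ v * c + s) = (x (2 ^ v * c) + Tm s) % 2 := by
  have hpow : 2 ^ n = 2 ^ v * 2 ^ N := by rw [hn, pow_add]
  set K := c / 2 ^ N with hK
  set w := c % 2 ^ N with hwdef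
  have hw : w < 2 ^ N := Nat.mod_lt _ (pow_pos (by norm_num) N)
  have hc : c = 2 ^ N * K + w := by rw [hK, hwdef]; exact (Nat.div_add_mod c (2 ^ N)).symm
  have hm : 2 ^ v * c + s = 2 ^ n * K + (2 ^ v * w + s) := by rw [hc, hpow]; ring
  have hr : 2 ^ v * w + s < 2 ^ n := by
    rw [hpow]
    calc 2 ^ v * w + s < 2 ^ v * w + 2 ^ v := by omega
    _ = 2 ^ v * (w + 1) := by ring
    _ ≤ 2 ^ v * 2 ^ N := Nat.mul_le_mul_left _ hw
  have hdiv : (2 ^ v * c + s) / 2 ^ n = K := by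
    rw [hm, Nat.mul_add_div (pow_pos (by norm_num) n),
      Nat.div_eq_of_lt hr, Nat.add_zero]
  have hmod : (2 ^ v * c + s) % 2 ^ n = 2 ^ v * w + s := by
    rw [hm, Nat.mul_add_mod, Nat.mod_eq_of_lt hr]
  have h1 := blockSeq_apply hx (2 ^ v * c + s)
  rw [hdiv, hmod, Tm_split v w s hs] at h1
  have h2 : x (2 ^ v * c) = (x (2 ^ n * K) + Tm w) % 2 := by
    rw [hc]; exact chunk_block hn hx K w hw
  rw [h1, h2, mul_comm K]
  have := blockSeq_le_one hx (2 ^ n * K)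
  have := Tm_le w
  have := Tm_le s
  omega

lemma chunk_pair {n v N : ℕ} (hn : n = v + N) (hN : 1 ≤ N) {x : ℕ → ℕ}
    (hx : IsBlockSeq n x) (u : ℕ) :
    x (2 ^ v * (2 * u + 1)) = 1 - x (2 ^ v * (2 * u)) := by
  have hpow : 2 ^ N = 2 * 2 ^ (N - 1) := by
    rw [← pow_succ']; congr 1; omega
  set K := u / 2 ^ (N - 1) with hK
  set w := u % 2 ^ (N - 1) with hwdef
  have hw : w < 2 ^ (N - 1) := Nat.mod_lt _ (pow_pos (by norm_num) _)
  have hu : u = 2 ^ (N - 1) * K + w := by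
    rw [hK, hwdef]; exact (Nat.div_add_mod u (2 ^ (N - 1))).symm
  have h0 : 2 * u = 2 ^ N * K + 2 * w := by rw [hu, hpow]; ring
  have h1 : 2 * u + 1 = 2 ^ N * K + (2 * w + 1) := by omega
  have hw0 : 2 * w < 2 ^ N := by omega
  have hw1 : 2 * w + 1 < 2 ^ N := by omega
  have e0 : x (2 ^ v * (2 * u)) = (x (2 ^ n * K) + Tm (2 * w)) % 2 := by
    rw [h0]; exact chunk_block hn hx K _ hw0
  have e1 : x (2 ^ v * (2 * u + 1)) = (x (2 ^ n * K) + Tm (2 * w + 1)) % 2 := by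
    rw [h1]; exact chunk_block hn hx K _ hw1
  rw [e0, e1, Tm_two_mul, Tm_two_mul_add_one]
  have := blockSeq_le_one hx (2 ^ n * K)
  have := Tm_le w
  omega

lemma chunk_quad {n v N : ℕ} (hn : n = v + N) (hN : 2 ≤ N) {y : ℕ → ℕ}
    (hy : IsBlockSeq n y) (s : ℕ) :
    y (2 ^ v * (4 * s + 1)) = 1 - y (2 ^ v * (4 * s)) ∧
      y (2 ^ v * (4 * s + 2)) = 1 - y (2 ^ v * (4 * s)) := by
  have hpow : 2 ^ N = 4 * 2 ^ (N - 2) := by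
    have h4 : (4:ℕ) * 2 ^ (N - 2) = 2 ^ (N - 2) * 2 ^ 2 := by ring
    rw [h4, ← pow_add]; congr 1; omega
  set K := s / 2 ^ (N - 2) with hK
  set w := s % 2 ^ (N - 2) with hwdef
  have hw : w < 2 ^ (N - 2) := Nat.mod_lt _ (pow_pos (by norm_num) _)
  have hs : s = 2 ^ (N - 2) * K + w := by
    rw [hK, hwdef]; exact (Nat.div_add_mod s (2 ^ (N - 2))).symm
  have h0 : 4 * s = 2 ^ N * K + 4 * w := by rw [hs, hpow]; ring
  have h1 : 4 * s + 1 = 2 ^ N * K + (4 * w + 1) := by omega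
  have h2 : 4 * s + 2 = 2 ^ N * K + (4 * w + 2) := by omega
  have hw0 : 4 * w < 2 ^ N := by omega
  have hw1 : 4 * w + 1 < 2 ^ N := by omega
  have hw2 : 4 * w + 2 < 2 ^ N := by omega
  have e0 : y (2 ^ v * (4 * s)) = (y (2 ^ n * K) + Tm (4 * w)) % 2 := by
    rw [h0]; exact chunk_block hn hy K _ hw0
  have e1 : y (2 ^ v * (4 * s + 1)) = (y (2 ^ n * K) + Tm (4 * w + 1)) % 2 := by
    rw [h1]; exact chunk_block hn hy K _ hw1
  have e2 : y (2 ^ v * (4 * s + 2)) = (y (2 ^ n * K) + Tm (4 * w + 2)) % 2 := by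
    rw [h2]; exact chunk_block hn hy K _ hw2
  have t0 : Tm (4 * w) = Tm w := by
    rw [show 4 * w = 2 * (2 * w) by ring, Tm_two_mul, Tm_two_mul]
  have t1 : Tm (4 * w + 1) = 1 - Tm w := by
    rw [show 4 * w + 1 = 2 * (2 * w) + 1 by ring, Tm_two_mul_add_one, Tm_two_mul]
  have t2 : Tm (4 * w + 2) = 1 - Tm w := by
    rw [show 4 * w + 2 = 2 * (2 * w + 1) by ring, Tm_two_mul, Tm_two_mul_add_one]
  rw [e0, e1, e2, t0, t1, t2]
  have := blockSeq_le_one hy (2 ^ n * K)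
  have := Tm_le w
  omega

lemma window_count (n i : ℕ) (hg : 4 * Nat.gcd i (2 ^ n) ≤ 2 ^ n)
    {x y : ℕ → ℕ} (hx : IsBlockSeq n x) (hy : IsBlockSeq n y) (k : ℕ) :
    2 ^ (n - 2) ≤ (∑ j ∈ Finset.range (2 ^ n),
        if x (k * 2 ^ n + j) = y (i + (k * 2 ^ n + j)) then 1 else 0 : ℕ) ∧
      (∑ j ∈ Finset.range (2 ^ n),
        if x (k * 2 ^ n + j) = y (i + (k * 2 ^ n + j)) then 1 else 0 : ℕ) ≤ 3 * 2 ^ (n - 2) := by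
  -- basic consequences of hg
  have hgcdpos : 0 < Nat.gcd i (2 ^ n) := Nat.gcd_pos_of_pos_right i (pow_pos (by norm_num) n)
  have hn2 : 2 ≤ n := by
    have h4 : 4 ≤ 2 ^ n := le_trans (by omega) hg
    by_contra h
    have hle : (2:ℕ) ^ n ≤ 2 ^ 1 := Nat.pow_le_pow_right (by norm_num) (by omega)
    norm_num at hle
    omega
  have hi0 : i ≠ 0 := by
    rintro rfl
    rw [Nat.gcd_zero_left] at hg
    have h1 : 1 ≤ 2 ^ n := Nat.one_le_two_pow
    omega
  obtain ⟨v, d, hd2, hi⟩ := Nat.exists_eq_pow_mul_and_not_dvd hi0 2 (by norm_num)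
  -- v ≤ n - 2
  have hvn : v + 2 ≤ n := by
    by_contra h
    push_neg at h
    have hdvd1 : 2 ^ (n - 1) ∣ i := by
      rw [hi]
      exact Dvd.dvd.mul_right (pow_dvd_pow 2 (by omega)) d
    have hdvd2 : (2 : ℕ) ^ (n - 1) ∣ 2 ^ n := pow_dvd_pow 2 (by omega)
    have hle : 2 ^ (n - 1) ≤ Nat.gcd i (2 ^ n) :=
      Nat.le_of_dvd hgcdpos (Nat.dvd_gcd hdvd1 hdvd2)
    have heq : (2 : ℕ) ^ n = 2 * 2 ^ (n - 1) := by
      rw [← pow_succ']; congr 1; omega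
    omega
  set N := n - v with hNdef
  have hn : n = v + N := by omega
  have hN : 2 ≤ N := by omega
  have hd1 : d % 2 = 1 := by
    rcases Nat.even_or_odd d with he | ho
    · exact absurd he.two_dvd hd2
    · omega
  set e := d / 2 with hedef
  have hde : d = 2 * e + 1 := by omega
  have hpow : (2 : ℕ) ^ n = 2 ^ v * 2 ^ N := by rw [hn, pow_add]
  have hpN1 : (2 : ℕ) ^ N = 2 * 2 ^ (N - 1) := by rw [← pow_succ']; congr 1; omega
  have hpN2 : (2 : ℕ) ^ (N - 1) = 2 * 2 ^ (N - 2) := by rw [← pow_succ']; congr 1; omega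
  -- the inner chunk count
  set g : ℕ → ℕ := fun a =>
    if x (2 ^ v * (2 ^ N * k + a)) = y (2 ^ v * (d + (2 ^ N * k + a))) then 1 else 0 with hgdef
  have hsum1 : (∑ j ∈ Finset.range (2 ^ n),
      if x (k * 2 ^ n + j) = y (i + (k * 2 ^ n + j)) then 1 else 0 : ℕ)
      = 2 ^ v * ∑ a ∈ Finset.range (2 ^ N), g a := by
    have hrange : Finset.range (2 ^ n) = Finset.range (2 ^ N * 2 ^ v) := by
      congr 1; rw [hpow]; ring
    rw [hrange, sum_range_mul, Finset.mul_sum]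
    refine Finset.sum_congr rfl ?_
    intro a _
    have hinner : ∀ s ∈ Finset.range (2 ^ v),
        (if x (k * 2 ^ n + (a * 2 ^ v + s)) = y (i + (k * 2 ^ n + (a * 2 ^ v + s))) then 1 else 0 : ℕ)
          = g a := by
      intro s hs
      rw [Finset.mem_range] at hs
      have posx : k * 2 ^ n + (a * 2 ^ v + s) = 2 ^ v * (2 ^ N * k + a) + s := by
        rw [hpow]; ring
      have posy : i + (k * 2 ^ n + (a * 2 ^ v + s)) = 2 ^ v * (d + (2 ^ N * k + a)) + s := by
        rw [hi, hpow]; ring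
      rw [posy, posx, chunk_formula hn hx _ s hs, chunk_formula hn hy _ s hs]
      simp only [hgdef]
      have hX := blockSeq_le_one hx (2 ^ v * (2 ^ N * k + a))
      have hY := blockSeq_le_one hy (2 ^ v * (d + (2 ^ N * k + a)))
      have hT := Tm_le s
      by_cases hXY : x (2 ^ v * (2 ^ N * k + a)) = y (2 ^ v * (d + (2 ^ N * k + a)))
      · rw [if_pos hXY, if_pos (by rw [hXY])]
      · rw [if_neg hXY, if_neg (by intro hmod; exact hXY (by omega))]
    rw [Finset.sum_congr rfl hinner, Finset.sum_const, Finset.card_range, smul_eq_mul,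
      mul_comm]
  -- pair decomposition
  have hsum2 : (∑ a ∈ Finset.range (2 ^ N), g a)
      = ∑ j ∈ Finset.range (2 ^ (N - 1)), (g (j * 2) + g (j * 2 + 1)) := by
    rw [show (2 : ℕ) ^ N = 2 ^ (N - 1) * 2 by omega, sum_range_mul g (2 ^ (N - 1)) 2]
    refine Finset.sum_congr rfl ?_
    intro j _
    rw [Finset.sum_range_succ, Finset.sum_range_one, Nat.add_zero]
  -- per-pair bounds
  have hub : ∀ j : ℕ, g (j * 2) + g (j * 2 + 1) ≤ 2 := by
    intro j
    rw [hgdef]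
    simp only
    split_ifs <;> omega
  have hexact : ∀ j : ℕ, (2 ^ (N - 1) * k + j + e) % 2 = 0 → g (j * 2) + g (j * 2 + 1) = 1 := by
    intro j hpar
    set u := 2 ^ (N - 1) * k + j with hudef
    set s0 := (u + e) / 2 with hs0def
    have hue : u + e = 2 * s0 := by omega
    have idx0 : 2 ^ N * k + j * 2 = 2 * u := by rw [hudef, hpN1]; ring
    have idx1 : 2 ^ N * k + (j * 2 + 1) = 2 * u + 1 := by omega
    have idy0 : d + 2 * u = 4 * s0 + 1 := by omega
    have idy1 : d + (2 * u + 1) = 4 * s0 + 2 := by omega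
    have hquad := chunk_quad hn hN hy s0
    have hpair := chunk_pair hn (by omega) hx u
    have hX0 := blockSeq_le_one hx (2 ^ v * (2 * u))
    have hY0 := blockSeq_le_one hy (2 ^ v * (4 * s0))
    rw [hgdef]
    simp only [idx0, idx1, idy0, idy1, hquad.1, hquad.2, hpair]
    split_ifs <;> omega
  -- the parity count
  have hC : (∑ j ∈ Finset.range (2 ^ (N - 1)),
      if (2 ^ (N - 1) * k + j + e) % 2 = 0 then 1 else 0 : ℕ) = 2 ^ (N - 2) := by
    have hrange2 : Finset.range (2 ^ (N - 1)) = Finset.range (2 ^ (N - 2) * 2) := by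
      congr 1; omega
    rw [hrange2, sum_range_mul]
    have : ∀ a ∈ Finset.range (2 ^ (N - 2)),
        (∑ b ∈ Finset.range 2,
          if (2 ^ (N - 1) * k + (a * 2 + b) + e) % 2 = 0 then 1 else 0 : ℕ) = 1 := by
      intro a _
      rw [Finset.sum_range_succ, Finset.sum_range_one]
      split_ifs <;> omega
    rw [Finset.sum_congr rfl this, Finset.sum_const, Finset.card_range, smul_eq_mul, mul_one]
  -- lower and upper bounds for the pair sum
  have hlow : 2 ^ (N - 2) ≤ ∑ j ∈ Finset.range (2 ^ (N - 1)), (g (j * 2) + g (j * 2 + 1)) := by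
    rw [← hC]
    refine Finset.sum_le_sum ?_
    intro j _
    by_cases hpar : (2 ^ (N - 1) * k + j + e) % 2 = 0
    · rw [if_pos hpar, hexact j hpar]
    · rw [if_neg hpar]; omega
  have hhigh : (∑ j ∈ Finset.range (2 ^ (N - 1)), (g (j * 2) + g (j * 2 + 1)))
      ≤ 3 * 2 ^ (N - 2) := by
    have key : (∑ j ∈ Finset.range (2 ^ (N - 1)), (g (j * 2) + g (j * 2 + 1)))
        + (∑ j ∈ Finset.range (2 ^ (N - 1)),
            if (2 ^ (N - 1) * k + j + e) % 2 = 0 then 1 else 0 : ℕ)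
        ≤ 2 * 2 ^ (N - 1) := by
      rw [← Finset.sum_add_distrib]
      calc (∑ j ∈ Finset.range (2 ^ (N - 1)), ((g (j * 2) + g (j * 2 + 1))
            + if (2 ^ (N - 1) * k + j + e) % 2 = 0 then 1 else 0))
          ≤ ∑ _j ∈ Finset.range (2 ^ (N - 1)), 2 := by
            refine Finset.sum_le_sum ?_
            intro j _
            by_cases hpar : (2 ^ (N - 1) * k + j + e) % 2 = 0
            · rw [if_pos hpar, hexact j hpar]
            · rw [if_neg hpar]
              have := hub j
              omega
        _ = 2 * 2 ^ (N - 1) := by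
            rw [Finset.sum_const, Finset.card_range, smul_eq_mul, mul_comm]
    rw [hC] at key
    omega
  -- assemble
  rw [hsum1, hsum2]
  have hfinal : (2 : ℕ) ^ (n - 2) = 2 ^ v * 2 ^ (N - 2) := by
    rw [← pow_add]; congr 1; omega
  constructor
  · calc (2 : ℕ) ^ (n - 2) = 2 ^ v * 2 ^ (N - 2) := hfinal
      _ ≤ 2 ^ v * ∑ j ∈ Finset.range (2 ^ (N - 1)), (g (j * 2) + g (j * 2 + 1)) :=
          Nat.mul_le_mul_left _ hlow
  · calc 2 ^ v * ∑ j ∈ Finset.range (2 ^ (N - 1)), (g (j * 2) + g (j * 2 + 1))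
        ≤ 2 ^ v * (3 * 2 ^ (N - 2)) := Nat.mul_le_mul_left _ hhigh
      _ = 3 * 2 ^ (n - 2) := by rw [hfinal]; ring

theorem technical_infinite (n i : ℕ) (hg : 4 * Nat.gcd i (2 ^ n) ≤ 2 ^ n)
    (x y : ℕ → ℕ) (hx : IsBlockSeq n x) (hy : IsBlockSeq n y) :
    1/4 ≤ LSD x (fun j => y (i + j)) ∧
      LSD x (fun j => y (i + j)) ≤ USD x (fun j => y (i + j)) ∧
      USD x (fun j => y (i + j)) ≤ 3/4 := by
  have hgcdpos : 0 < Nat.gcd i (2 ^ n) :=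
    Nat.gcd_pos_of_pos_right i (pow_pos (by norm_num) n)
  have hn2 : 2 ≤ n := by
    have h4 : 4 ≤ 2 ^ n := le_trans (by omega) hg
    by_contra h
    have hle : (2:ℕ) ^ n ≤ 2 ^ 1 := Nat.pow_le_pow_right (by norm_num) (by omega)
    norm_num at hle
    omega
  have hL4 : (2:ℕ) ^ n = 4 * 2 ^ (n - 2) := by
    have h4 : (4:ℕ) * 2 ^ (n - 2) = 2 ^ (n - 2) * 2 ^ 2 := by ring
    rw [h4, ← pow_add]; congr 1; omega
  set G : ℕ → ℕ := fun m => ∑ j ∈ Finset.range m, if x j = y (i + j) then 1 else 0 with hGdef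
  have hSD : ∀ m : ℕ, SDp x (fun j => y (i + j)) m = (G m : ℝ) / m := by
    intro m
    unfold SDp
    rw [hGdef]
    congr 1
    rw [Nat.cast_sum]
    refine Finset.sum_congr rfl ?_
    intro t _
    by_cases h : x t = y (i + t) <;> simp [h]
  have hGstep : ∀ q : ℕ, G ((q + 1) * 2 ^ n) = G (q * 2 ^ n) +
      ∑ j ∈ Finset.range (2 ^ n), (if x (q * 2 ^ n + j) = y (i + (q * 2 ^ n + j)) then 1 else 0) := by
    intro q
    rw [hGdef]
    simp only
    rw [show (q + 1) * 2 ^ n = q * 2 ^ n + 2 ^ n by ring, Finset.sum_range_add]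
  have hGq : ∀ q : ℕ, q * 2 ^ (n - 2) ≤ G (q * 2 ^ n) ∧ G (q * 2 ^ n) ≤ q * (3 * 2 ^ (n - 2)) := by
    intro q
    induction q with
    | zero => simp [hGdef]
    | succ q ih =>
      rw [hGstep q]
      have hw := window_count n i hg hx hy q
      have e1 : (q + 1) * 2 ^ (n - 2) = q * 2 ^ (n - 2) + 2 ^ (n - 2) := by ring
      have e2 : (q + 1) * (3 * 2 ^ (n - 2)) = q * (3 * 2 ^ (n - 2)) + 3 * 2 ^ (n - 2) := by ring
      omega
  have hGmono : ∀ {m m' : ℕ}, m ≤ m' → G m ≤ G m' := by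
    intro m m' h
    rw [hGdef]
    refine Finset.sum_le_sum_of_subset (Finset.range_subset_range.mpr h)
  have claim3 : ∀ m : ℕ, G m ≤ m := by
    intro m
    rw [hGdef]
    calc (∑ j ∈ Finset.range m, if x j = y (i + j) then 1 else 0 : ℕ)
        ≤ ∑ _j ∈ Finset.range m, 1 := by
          refine Finset.sum_le_sum ?_
          intro j _
          split_ifs <;> omega
      _ = m := by simp
  have claim1 : ∀ m : ℕ, m ≤ 4 * G m + 2 ^ n := by
    intro m
    set q := m / 2 ^ n with hq
    have hdm : 2 ^ n * q + m % 2 ^ n = m := Nat.div_add_mod m (2 ^ n)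
    have hmod : m % 2 ^ n < 2 ^ n := Nat.mod_lt _ (pow_pos (by norm_num) n)
    have hqq : 2 ^ n * q = 4 * (q * 2 ^ (n - 2)) := by rw [hL4]; ring
    have hmono : G (q * 2 ^ n) ≤ G m := hGmono (by rw [mul_comm]; omega)
    have hlow := (hGq q).1
    omega
  have claim2 : ∀ m : ℕ, 4 * G m ≤ 3 * m + 3 * 2 ^ n := by
    intro m
    set q := m / 2 ^ n with hq
    have hdm : 2 ^ n * q + m % 2 ^ n = m := Nat.div_add_mod m (2 ^ n)
    have hmod : m % 2 ^ n < 2 ^ n := Nat.mod_lt _ (pow_pos (by norm_num) n)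
    have hup := (hGq (q + 1)).2
    have hmono : G m ≤ G ((q + 1) * 2 ^ n) := by
      refine hGmono ?_
      have : (q + 1) * 2 ^ n = 2 ^ n * q + 2 ^ n := by ring
      omega
    have heq : 4 * ((q + 1) * (3 * 2 ^ (n - 2))) = 3 * (2 ^ n * q) + 3 * 2 ^ n := by
      rw [hL4]; ring
    omega
  -- real-valued bounds
  have hSDnn : ∀ m : ℕ, 0 ≤ SDp x (fun j => y (i + j)) m := by
    intro m
    rw [hSD m]
    positivity
  have hSDle1 : ∀ m : ℕ, SDp x (fun j => y (i + j)) m ≤ 1 := by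
    intro m
    rw [hSD m]
    rcases Nat.eq_zero_or_pos m with rfl | hm
    · simp
    · rw [div_le_one (by exact_mod_cast hm)]
      exact_mod_cast claim3 m
  set C : ℝ := ((2 ^ n : ℕ) : ℝ) with hC
  have hlbt : Filter.Tendsto (fun m : ℕ => 1/4 - C/4 / m) Filter.atTop (nhds (1/4)) := by
    have h0 := tendsto_const_div_atTop_nhds_zero_nat (C/4)
    simpa using (h0.const_sub (1/4 : ℝ))
  have hubt : Filter.Tendsto (fun m : ℕ => 3/4 + 3*C/4 / m) Filter.atTop (nhds (3/4)) := by
    have h0 := tendsto_const_div_atTop_nhds_zero_nat (3*C/4)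
    simpa using (h0.const_add (3/4 : ℝ))
  have hlb_le : ∀ᶠ m : ℕ in Filter.atTop, (1/4 - C/4 / m) ≤ SDp x (fun j => y (i + j)) m := by
    rw [Filter.eventually_atTop]
    refine ⟨1, fun m hm => ?_⟩
    have hm0 : (0:ℝ) < m := by exact_mod_cast hm
    rw [hSD m, le_div_iff₀ hm0]
    have key : (m:ℝ) ≤ 4 * G m + C := by rw [hC]; exact_mod_cast claim1 m
    have expand : (1/4 - C/4 / m) * m = m/4 - C/4 := by field_simp
    rw [expand]
    linarith
  have hub_le : ∀ᶠ m : ℕ in Filter.atTop, SDp x (fun j => y (i + j)) m ≤ (3/4 + 3*C/4 / m) := by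
    rw [Filter.eventually_atTop]
    refine ⟨1, fun m hm => ?_⟩
    have hm0 : (0:ℝ) < m := by exact_mod_cast hm
    rw [hSD m, div_le_iff₀ hm0]
    have key : 4 * (G m : ℝ) ≤ 3 * m + 3 * C := by rw [hC]; exact_mod_cast claim2 m
    have expand : (3/4 + 3*C/4 / m) * m = 3*m/4 + 3*C/4 := by field_simp
    rw [expand]
    linarith
  have hBle : Filter.IsBoundedUnder (· ≤ ·) Filter.atTop (SDp x (fun j => y (i + j))) :=
    Filter.isBoundedUnder_of ⟨1, fun m => hSDle1 m⟩
  have hBge : Filter.IsBoundedUnder (· ≥ ·) Filter.atTop (SDp x (fun j => y (i + j))) :=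
    Filter.isBoundedUnder_of ⟨0, fun m => hSDnn m⟩
  refine ⟨?_, ?_, ?_⟩
  · have h1 : (1/4 : ℝ) = Filter.liminf (fun m : ℕ => 1/4 - C/4 / m) Filter.atTop :=
      (hlbt.liminf_eq).symm
    rw [h1]
    exact Filter.liminf_le_liminf hlb_le hlbt.isBoundedUnder_ge hBle.isCoboundedUnder_ge
  · exact Filter.liminf_le_limsup hBle hBge
  · have h1 : (3/4 : ℝ) = Filter.limsup (fun m : ℕ => 3/4 + 3*C/4 / m) Filter.atTop :=
      (hubt.limsup_eq).symm
    rw [h1]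
    exact Filter.limsup_le_limsup hub_le hBge.isCoboundedUnder_le hubt.isBoundedUnder_le
end

section
/- For every i ∈ ℕ with i ≥ 1, the Thue–Morse sequence t satisfies 1/4 ≤ LSD(t, t[i..∞]) ≤ USD(t, t[i..∞]) ≤ 3/4. -/
lemma t_lt_two (n : ℕ) : t n < 2 := Nat.mod_lt _ (by norm_num)

lemma t_two_mul (n : ℕ) : t (2 * n) = t n := by
  rcases Nat.eq_zero_or_pos n with h | h
  · simp [h]
  · unfold t
    rw [Nat.digits_def' (by norm_num : 1 < 2) (by omega)]
    simp [Nat.mul_div_cancel_left, Nat.mul_mod_right]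

lemma t_two_mul_add_one (n : ℕ) : t (2 * n + 1) = (t n + 1) % 2 := by
  unfold t
  rw [Nat.digits_def' (by norm_num : 1 < 2) (by omega)]
  have h1 : (2*n+1) % 2 = 1 := by omega
  have h2 : (2*n+1)/2 = n := by omega
  simp [h1, h2, List.count_cons]

def aa (i j : ℕ) : ℕ := if t j = t (i + j) then 1 else 0

def S (i n : ℕ) : ℕ := ∑ j ∈ Finset.range n, aa i j

lemma S_succ (i n : ℕ) : S i (n+1) = S i n + aa i n := Finset.sum_range_succ _ _

lemma S_mono (i : ℕ) : Monotone (S i) := fun _ _ h =>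
  Finset.sum_le_sum_of_subset (Finset.range_subset_range.2 h)

lemma aa_even_even (i n : ℕ) : aa (2*i) (2*n) = aa i n := by
  unfold aa
  rw [show 2*i + 2*n = 2*(i+n) by ring, t_two_mul, t_two_mul]

lemma aa_even_odd (i n : ℕ) : aa (2*i) (2*n+1) = aa i n := by
  unfold aa
  rw [show 2*i + (2*n+1) = 2*(i+n)+1 by ring, t_two_mul_add_one, t_two_mul_add_one]
  have h1 := t_lt_two n
  have h2 := t_lt_two (i+n)
  rw [if_congr (by omega : ((t n + 1) % 2 = (t (i+n) + 1) % 2) ↔ t n = t (i+n)) rfl rfl]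

lemma S_double (i n : ℕ) : S (2*i) (2*n) = 2 * S i n := by
  induction n with
  | zero => simp [S]
  | succ n ih =>
    rw [show 2*(n+1) = (2*n+1)+1 by ring, S_succ, S_succ, ih, aa_even_even, aa_even_odd,
      S_succ]
    ring

lemma block_odd (k p : ℕ) :
    1 ≤ aa (2*k+1) (4*p) + aa (2*k+1) (4*p+1) + aa (2*k+1) (4*p+2) + aa (2*k+1) (4*p+3) ∧
    aa (2*k+1) (4*p) + aa (2*k+1) (4*p+1) + aa (2*k+1) (4*p+2) + aa (2*k+1) (4*p+3) ≤ 3 := by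
  have hx := t_lt_two p
  have e0 : t (4*p) = t p := by
    rw [show (4*p : ℕ) = 2*(2*p) by ring, t_two_mul, t_two_mul]
  have e1 : t (4*p+1) = (t p + 1) % 2 := by
    rw [show (4*p+1 : ℕ) = 2*(2*p)+1 by ring, t_two_mul_add_one, t_two_mul]
  have e2 : t (4*p+2) = (t p + 1) % 2 := by
    rw [show (4*p+2 : ℕ) = 2*(2*p+1) by ring, t_two_mul, t_two_mul_add_one]
  have e3 : t (4*p+3) = ((t p + 1) % 2 + 1) % 2 := by
    rw [show (4*p+3 : ℕ) = 2*(2*p+1)+1 by ring, t_two_mul_add_one, t_two_mul_add_one]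
  have f0 : t (2*k+1 + 4*p) = (t (2*p+k) + 1) % 2 := by
    rw [show (2*k+1+4*p : ℕ) = 2*(2*p+k)+1 by ring, t_two_mul_add_one]
  have f1 : t (2*k+1 + (4*p+1)) = t (2*p+k+1) := by
    rw [show (2*k+1+(4*p+1) : ℕ) = 2*(2*p+k+1) by ring, t_two_mul]
  have f2 : t (2*k+1 + (4*p+2)) = (t (2*p+k+1) + 1) % 2 := by
    rw [show (2*k+1+(4*p+2) : ℕ) = 2*(2*p+k+1)+1 by ring, t_two_mul_add_one]
  have f3 : t (2*k+1 + (4*p+3)) = t (2*p+k+2) := by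
    rw [show (2*k+1+(4*p+3) : ℕ) = 2*(2*p+k+2) by ring, t_two_mul]
  simp only [aa, e0, e1, e2, e3, f0, f1, f2, f3]
  have hy := t_lt_two (p + k/2)
  have hz := t_lt_two (p + k/2 + 1)
  rcases Nat.even_or_odd k with ⟨q, hq⟩ | ⟨q, hq⟩
  · have hq2 : k = 2*q := by omega
    subst hq2
    have g1 : t (2*p+2*q) = t (p+q) := by
      rw [show (2*p+2*q : ℕ) = 2*(p+q) by ring, t_two_mul]
    have g2 : t (2*p+2*q+1) = (t (p+q) + 1) % 2 := by
      rw [show (2*p+2*q+1 : ℕ) = 2*(p+q)+1 by ring, t_two_mul_add_one]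
    have g3 : t (2*p+2*q+2) = t (p+q+1) := by
      rw [show (2*p+2*q+2 : ℕ) = 2*(p+q+1) by ring, t_two_mul]
    simp only [g1, g2, g3]
    have hy := t_lt_two (p+q)
    have hz := t_lt_two (p+q+1)
    set x := t p; set y := t (p+q); set z := t (p+q+1)
    interval_cases x <;> interval_cases y <;> interval_cases z <;> simp
  · subst hq
    have g1 : t (2*p+(2*q+1)) = (t (p+q) + 1) % 2 := by
      rw [show (2*p+(2*q+1) : ℕ) = 2*(p+q)+1 by ring, t_two_mul_add_one]
    have g2 : t (2*p+(2*q+1)+1) = t (p+q+1) := by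
      rw [show (2*p+(2*q+1)+1 : ℕ) = 2*(p+q+1) by ring, t_two_mul]
    have g3 : t (2*p+(2*q+1)+2) = (t (p+q+1) + 1) % 2 := by
      rw [show (2*p+(2*q+1)+2 : ℕ) = 2*(p+q+1)+1 by ring, t_two_mul_add_one]
    simp only [g1, g2, g3]
    have hy := t_lt_two (p+q)
    have hz := t_lt_two (p+q+1)
    set x := t p; set y := t (p+q); set z := t (p+q+1)
    interval_cases x <;> interval_cases y <;> interval_cases z <;> simp

lemma key (i : ℕ) (hi : 1 ≤ i) : ∃ L : ℕ, 0 < L ∧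
    ∀ p, 4 * S i (L*p) + L ≤ 4 * S i (L*(p+1)) ∧
      4 * S i (L*(p+1)) ≤ 4 * S i (L*p) + 3*L := by
  induction i using Nat.strong_induction_on with
  | _ i ih =>
    rcases Nat.even_or_odd i with ⟨m, hm⟩ | ⟨k, hk⟩
    · have hm2 : i = 2*m := by omega
      have hm1 : 1 ≤ m := by omega
      obtain ⟨L, hL, hblk⟩ := ih m (by omega) hm1
      refine ⟨2*L, by omega, fun p => ?_⟩
      have h1 : S i (2*L*p) = 2 * S m (L*p) := by
        rw [hm2, show 2*L*p = 2*(L*p) by ring, S_double]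
      have h2 : S i (2*L*(p+1)) = 2 * S m (L*(p+1)) := by
        rw [hm2, show 2*L*(p+1) = 2*(L*(p+1)) by ring, S_double]
      have := hblk p
      omega
    · subst hk
      refine ⟨4, by norm_num, fun p => ?_⟩
      have h1 : S (2*k+1) (4*(p+1)) = S (2*k+1) (4*p) +
          (aa (2*k+1) (4*p) + aa (2*k+1) (4*p+1) + aa (2*k+1) (4*p+2) + aa (2*k+1) (4*p+3)) := by
        rw [show 4*(p+1) = (4*p+1+1+1)+1 by ring, S_succ, S_succ, S_succ, S_succ]
        ring_nf
      have hb := block_odd k p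
      omega

lemma key2 (i : ℕ) (hi : 1 ≤ i) : ∃ L : ℕ, 0 < L ∧
    ∀ p, L*p ≤ 4 * S i (L*p) ∧ 4 * S i (L*p) ≤ 3*(L*p) := by
  obtain ⟨L, hL, hblk⟩ := key i hi
  refine ⟨L, hL, fun p => ?_⟩
  induction p with
  | zero => simp [S]
  | succ p ihp =>
    have := hblk p
    have e : L*(p+1) = L*p + L := by ring
    omega

lemma key3 (i : ℕ) (hi : 1 ≤ i) : ∃ L : ℕ, 0 < L ∧
    ∀ n, n ≤ 4 * S i n + L ∧ 4 * S i n ≤ 3*(n+L) := by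
  obtain ⟨L, hL, h⟩ := key2 i hi
  refine ⟨L, hL, fun n => ?_⟩
  have h1 := h (n / L)
  have h2 := h (n / L + 1)
  have hdm : L * (n / L) + n % L = n := Nat.div_add_mod n L
  have hmod : n % L < L := Nat.mod_lt _ hL
  have e : L * (n / L + 1) = L * (n / L) + L := by ring
  rw [e] at h2
  have m1 : S i (L * (n / L)) ≤ S i n := S_mono i (Nat.le.intro hdm)
  have m2 : S i n ≤ S i (L * (n / L) + L) := S_mono i (by omega)
  obtain ⟨M, hM⟩ : ∃ M, M = L * (n / L) := ⟨_, rfl⟩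
  rw [← hM] at h1 h2 hdm m1 m2
  omega

lemma SDp_nonneg_s17 (x y : ℕ → ℕ) (n : ℕ) : 0 ≤ SDp x y n := by
  unfold SDp
  apply div_nonneg _ (Nat.cast_nonneg n)
  exact Finset.sum_nonneg fun j _ => by positivity

lemma SDp_le_one_s17 (x y : ℕ → ℕ) (n : ℕ) : SDp x y n ≤ 1 := by
  unfold SDp
  rcases Nat.eq_zero_or_pos n with h | h
  · simp [h]
  · rw [div_le_one (by exact_mod_cast h)]
    calc (∑ j ∈ Finset.range n, if x j = y j then (1:ℝ) else 0)
        ≤ ∑ j ∈ Finset.range n, 1 := Finset.sum_le_sum fun j _ => by split <;> norm_num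
      _ = n := by simp

lemma SDp_eq_s17 (i n : ℕ) : SDp t (fun j => t (i + j)) n = (S i n : ℝ) / n := by
  unfold SDp S
  rw [Nat.cast_sum]
  congr 1
  refine Finset.sum_congr rfl fun j _ => ?_
  unfold aa
  split_ifs <;> simp


open Filter Topology in
theorem technical_infinite_t (i : ℕ) (hi : 1 ≤ i) :
    1/4 ≤ LSD t (fun j => t (i + j)) ∧
      LSD t (fun j => t (i + j)) ≤ USD t (fun j => t (i + j)) ∧
      USD t (fun j => t (i + j)) ≤ 3/4 := by
  obtain ⟨L, hL, hb⟩ := key3 i hi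
  set u := SDp t (fun j => t (i + j)) with hu
  have hu0 : ∀ n, 0 ≤ u n := fun n => SDp_nonneg_s17 _ _ n
  have hu1 : ∀ n, u n ≤ 1 := fun n => SDp_le_one_s17 _ _ n
  have hbdd_above : IsBoundedUnder (· ≤ ·) atTop u := isBoundedUnder_of ⟨1, hu1⟩
  have hbdd_below : IsBoundedUnder (· ≥ ·) atTop u := isBoundedUnder_of ⟨0, hu0⟩
  -- lower comparison function
  have hglo : ∀ᶠ n : ℕ in atTop, ((n:ℝ) - L) / (4*n) ≤ u n := by
    filter_upwards [eventually_ge_atTop 1] with n hn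
    have hn0 : (0:ℝ) < n := by exact_mod_cast hn
    have hR : ((n:ℝ)) ≤ 4 * S i n + L := by exact_mod_cast (hb n).1
    rw [hu, SDp_eq_s17]
    rw [div_le_div_iff₀ (by positivity) hn0]
    nlinarith
  have hgt : Tendsto (fun n : ℕ => ((n:ℝ) - L) / (4*n)) atTop (𝓝 (1/4)) := by
    have h0 : Tendsto (fun n : ℕ => (L:ℝ)/n) atTop (𝓝 0) :=
      tendsto_const_div_atTop_nhds_zero_nat (L:ℝ)
    have h1 : Tendsto (fun n : ℕ => (1 - (L:ℝ)/n)/4) atTop (𝓝 ((1-0)/4)) :=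
      (tendsto_const_nhds.sub h0).div_const 4
    rw [show ((1:ℝ)-0)/4 = 1/4 by norm_num] at h1
    refine h1.congr' ?_
    filter_upwards [eventually_ge_atTop 1] with n hn
    have hn0 : (n:ℝ) ≠ 0 := by positivity
    field_simp
  -- upper comparison function
  have hghi : ∀ᶠ n : ℕ in atTop, u n ≤ 3*((n:ℝ) + L) / (4*n) := by
    filter_upwards [eventually_ge_atTop 1] with n hn
    have hn0 : (0:ℝ) < n := by exact_mod_cast hn
    have hR : 4 * (S i n : ℝ) ≤ 3 * ((n:ℝ) + L) := by exact_mod_cast (hb n).2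
    rw [hu, SDp_eq_s17]
    rw [div_le_div_iff₀ hn0 (by positivity)]
    nlinarith
  have hht : Tendsto (fun n : ℕ => 3*((n:ℝ) + L) / (4*n)) atTop (𝓝 (3/4)) := by
    have h0 : Tendsto (fun n : ℕ => (L:ℝ)/n) atTop (𝓝 0) :=
      tendsto_const_div_atTop_nhds_zero_nat (L:ℝ)
    have h1 : Tendsto (fun n : ℕ => 3*(1 + (L:ℝ)/n)/4) atTop (𝓝 (3*(1+0)/4)) :=
      ((tendsto_const_nhds.add h0).const_mul 3).div_const 4
    rw [show (3:ℝ)*(1+0)/4 = 3/4 by norm_num] at h1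
    refine h1.congr' ?_
    filter_upwards [eventually_ge_atTop 1] with n hn
    have hn0 : (n:ℝ) ≠ 0 := by positivity
    field_simp
  refine ⟨?_, ?_, ?_⟩
  · rw [LSD, ← hgt.liminf_eq]
    exact liminf_le_liminf hglo hgt.isBoundedUnder_ge hbdd_above.isCoboundedUnder_ge
  · exact liminf_le_limsup hbdd_above hbdd_below
  · rw [USD, ← hht.limsup_eq]
    exact limsup_le_limsup hghi hbdd_below.isCoboundedUnder_le hht.isBoundedUnder_le
end
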